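/- Let T ≥ 1, ε > 0, and δ > 0 satisfy: for all x, y : Fin d → ℝ, if ‖x − y‖₁ ≤ δ then |W(x) − W(y)| ≤ ε/2. Set α = δ/(T·d). Then for every greedy RAVI policy σ_α and every state s ∈ S, the executed value satisfies U(s, 0, 0, T) ≥ V*(s, 0, T) − ε, where 0 denotes the zero vector in Fin d → ℝ. -/

import Mathlib

/-- The L1 norm on `Fin d → ℝ`: `‖x‖₁ = ∑ i, |x i|`. -/
noncomputable def l1norm {d : ℕ} (x : Fin d → ℝ) : ℝ := ∑ i, |x i|

/-- The discretization map `f_α(x) i = ⌊x i / α⌋·α`. -/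
noncomputable def falpha {d : ℕ} (α : ℝ) (x : Fin d → ℝ) : Fin d → ℝ :=
  fun i => (⌊x i / α⌋ : ℝ) * α

/-- The optimal value function `V*` of an MOMDP, defined by backward recursion on the
number `t` of remaining steps. -/
noncomputable def Vstar {S A : Type} [Fintype S] [Fintype A] [Nonempty A] {d : ℕ}
    (P : S → A → S → ℝ) (R : S → A → Fin d → ℝ) (γ : ℝ) (T : ℕ)
    (W : (Fin d → ℝ) → ℝ) : ℕ → S → (Fin d → ℝ) → ℝ
  | 0, _, v => W v
  | t + 1, s, v => Finset.univ.sup' Finset.univ_nonempty fun a : A =>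
      ∑ s' : S, P s a s' * Vstar P R γ T W t s' (v + γ ^ (T - (t + 1)) • R s a)

/-- The RAVI value function `V_α`, defined like `V*` but with the accumulated reward
discretized by `f_α` at each step. -/
noncomputable def Vravi {S A : Type} [Fintype S] [Fintype A] [Nonempty A] {d : ℕ}
    (P : S → A → S → ℝ) (R : S → A → Fin d → ℝ) (γ : ℝ) (T : ℕ)
    (W : (Fin d → ℝ) → ℝ) (α : ℝ) : ℕ → S → (Fin d → ℝ) → ℝ
  | 0, _, v => W v
  | t + 1, s, v => Finset.univ.sup' Finset.univ_nonempty fun a : A =>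
      ∑ s' : S, P s a s' *
        Vravi P R γ T W α t s' (falpha α (v + γ ^ (T - (t + 1)) • R s a))

/-- The executed value `U` of a greedy RAVI policy `σ`, tracking both the true
accumulated reward `v` and its discretized surrogate `w`:  `U(s, v, w, 0) = W v` and,
for `t ≥ 1`, with `a = σ s w t`,
`U(s, v, w, t) = ∑_{s'} P s a s' · U(s', v + γ^{T−t} • R s a, f_α(w + γ^{T−t} • R s a), t−1)`. -/
noncomputable def Uexec {S A : Type} [Fintype S] [Fintype A] {d : ℕ}
    (P : S → A → S → ℝ) (R : S → A → Fin d → ℝ) (γ : ℝ) (T : ℕ)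
    (W : (Fin d → ℝ) → ℝ) (α : ℝ) (σ : S → (Fin d → ℝ) → ℕ → A) :
    ℕ → S → (Fin d → ℝ) → (Fin d → ℝ) → ℝ
  | 0, _, v, _ => W v
  | t + 1, s, v, w => ∑ s' : S, P s (σ s w (t + 1)) s' *
      Uexec P R γ T W α σ t s'
        (v + γ ^ (T - (t + 1)) • R s (σ s w (t + 1)))
        (falpha α (w + γ ^ (T - (t + 1)) • R s (σ s w (t + 1))))

/-- optimality guarantee of RAVI.  Let `T ≥ 1`, `ε > 0`, `δ > 0`
satisfy `|W x − W y| ≤ ε/2` whenever `‖x − y‖₁ ≤ δ`, and set `α = δ/(T·d)`.  Then for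
every greedy RAVI policy `σ_α` and every state `s`, the executed value satisfies
`U(s, 0, 0, T) ≥ V*(s, 0, T) − ε`. -/

lemma l1_falpha_bound {d : ℕ} {α : ℝ} (hα : 0 < α) (v w : Fin d → ℝ) :
    l1norm (v - falpha α w) ≤ l1norm (v - w) + d * α := by
  unfold l1norm falpha
  have h : ∀ i : Fin d, |(v - fun j => (⌊w j / α⌋ : ℝ) * α) i| ≤ |(v - w) i| + α := by
    intro i
    have h0 : (⌊w i / α⌋ : ℝ) * α ≤ w i := by
      rw [← le_div_iff₀ hα]; exact Int.floor_le _
    have h1 : w i < ((⌊w i / α⌋ : ℝ) + 1) * α := by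
      rw [← div_lt_iff₀ hα]; exact Int.lt_floor_add_one _
    simp only [Pi.sub_apply]
    have : |w i - (⌊w i / α⌋ : ℝ) * α| ≤ α := by
      rw [abs_le]; constructor <;> nlinarith
    calc |v i - (⌊w i / α⌋ : ℝ) * α| ≤ |v i - w i| + |w i - (⌊w i / α⌋ : ℝ) * α| := by
          have := abs_sub_abs_le_abs_sub (v i - (⌊w i / α⌋:ℝ)*α) (w i - (⌊w i / α⌋:ℝ)*α)
          have := abs_sub_le (v i) (w i) ((⌊w i / α⌋:ℝ)*α)
          linarith
      _ ≤ |v i - w i| + α := by linarith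
  calc ∑ i, |(v - fun j => (⌊w j / α⌋ : ℝ) * α) i| ≤ ∑ i, (|(v - w) i| + α) :=
        Finset.sum_le_sum fun i _ => h i
    _ = (∑ i, |(v - w) i|) + d * α := by
        rw [Finset.sum_add_distrib, Finset.sum_const, Finset.card_univ, Fintype.card_fin,
          nsmul_eq_mul]

lemma abs_sup'_sub_sup'_le {A : Type} [Fintype A] [Nonempty A] (f g : A → ℝ) (c : ℝ)
    (h : ∀ a, |f a - g a| ≤ c) :
    |Finset.univ.sup' Finset.univ_nonempty f - Finset.univ.sup' Finset.univ_nonempty g| ≤ c := by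
  rw [abs_sub_le_iff]
  constructor
  · rw [sub_le_iff_le_add]
    apply Finset.sup'_le
    intro a _
    have ha := abs_sub_le_iff.mp (h a)
    have hg := Finset.le_sup' g (Finset.mem_univ a)
    linarith [ha.1]
  · rw [sub_le_iff_le_add]
    apply Finset.sup'_le
    intro a _
    have ha := abs_sub_le_iff.mp (h a)
    have hf := Finset.le_sup' f (Finset.mem_univ a)
    linarith [ha.2]

lemma abs_sum_mul_sub_le {S : Type} [Fintype S] (P : S → ℝ) (hP0 : ∀ s, 0 ≤ P s)
    (hP1 : ∑ s, P s = 1) (f g : S → ℝ) (c : ℝ) (hc : ∀ s, |f s - g s| ≤ c) :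
    |∑ s, P s * f s - ∑ s, P s * g s| ≤ c := by
  rw [← Finset.sum_sub_distrib]
  calc |∑ s, (P s * f s - P s * g s)| ≤ ∑ s, |P s * f s - P s * g s| :=
        Finset.abs_sum_le_sum_abs _ _
    _ ≤ ∑ s, P s * c := by
        apply Finset.sum_le_sum; intro s _
        rw [← mul_sub, abs_mul, abs_of_nonneg (hP0 s)]
        exact mul_le_mul_of_nonneg_left (hc s) (hP0 s)
    _ = c := by rw [← Finset.sum_mul, hP1, one_mul]

lemma vravi_close {S A : Type} [Fintype S] [Fintype A] [Nonempty A] {d : ℕ}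
    (P : S → A → S → ℝ) (hP0 : ∀ s a s', 0 ≤ P s a s') (hP1 : ∀ s a, ∑ s', P s a s' = 1)
    (R : S → A → Fin d → ℝ) (γ : ℝ) (T : ℕ) (W : (Fin d → ℝ) → ℝ)
    (ε δ α : ℝ) (hαpos : 0 < α)
    (hW : ∀ x y : Fin d → ℝ, l1norm (x - y) ≤ δ → |W x - W y| ≤ ε / 2) :
    ∀ (t : ℕ) (s : S) (v w : Fin d → ℝ), l1norm (v - w) + t * (d * α) ≤ δ →
      |Vstar P R γ T W t s v - Vravi P R γ T W α t s w| ≤ ε / 2 := by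
  intro t
  induction t with
  | zero =>
    intro s v w h
    simp only [Vstar, Vravi]
    exact hW v w (by simpa using h)
  | succ t ih =>
    intro s v w h
    rw [Vstar, Vravi]
    apply abs_sup'_sub_sup'_le
    intro a
    apply abs_sum_mul_sub_le _ (hP0 s a) (hP1 s a)
    intro s'
    apply ih
    have h1 := l1_falpha_bound hαpos (v + γ ^ (T - (t+1)) • R s a)
      (w + γ ^ (T - (t+1)) • R s a)
    have h2 : (v + γ ^ (T - (t+1)) • R s a) - (w + γ ^ (T - (t+1)) • R s a) = v - w := by
      abel
    rw [h2] at h1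
    push_cast at h ⊢
    linarith

lemma uexec_close {S A : Type} [Fintype S] [Fintype A] [Nonempty A] {d : ℕ}
    (P : S → A → S → ℝ) (hP0 : ∀ s a s', 0 ≤ P s a s') (hP1 : ∀ s a, ∑ s', P s a s' = 1)
    (R : S → A → Fin d → ℝ) (γ : ℝ) (T : ℕ) (W : (Fin d → ℝ) → ℝ)
    (ε δ α : ℝ) (hαpos : 0 < α)
    (hW : ∀ x y : Fin d → ℝ, l1norm (x - y) ≤ δ → |W x - W y| ≤ ε / 2)
    (σ : S → (Fin d → ℝ) → ℕ → A)
    (hσ : ∀ (s : S) (v : Fin d → ℝ) (t : ℕ), 1 ≤ t → t ≤ T →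
      ∑ s' : S, P s (σ s v t) s' *
          Vravi P R γ T W α (t - 1) s' (falpha α (v + γ ^ (T - t) • R s (σ s v t)))
        = Vravi P R γ T W α t s v) :
    ∀ (t : ℕ), t ≤ T → ∀ (s : S) (v w : Fin d → ℝ), l1norm (v - w) + t * (d * α) ≤ δ →
      |Uexec P R γ T W α σ t s v w - Vravi P R γ T W α t s w| ≤ ε / 2 := by
  intro t
  induction t with
  | zero =>
    intro _ s v w h
    simp only [Uexec, Vravi]
    exact hW v w (by simpa using h)
  | succ t ih =>
    intro hle s v w h
    rw [Uexec, ← hσ s w (t+1) (Nat.le_add_left 1 t) hle]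
    simp only [Nat.add_sub_cancel]
    apply abs_sum_mul_sub_le _ (hP0 s _) (hP1 s _)
    intro s'
    apply ih (by omega)
    have h1 := l1_falpha_bound hαpos
      (v + γ ^ (T - (t+1)) • R s (σ s w (t+1)))
      (w + γ ^ (T - (t+1)) • R s (σ s w (t+1)))
    have h2 : (v + γ ^ (T - (t+1)) • R s (σ s w (t+1)))
        - (w + γ ^ (T - (t+1)) • R s (σ s w (t+1))) = v - w := by abel
    rw [h2] at h1
    push_cast at h ⊢
    linarith

theorem ravi_optimality {S A : Type} [Fintype S] [Fintype A] [Nonempty S] [Nonempty A]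
    {d : ℕ} (hd : 1 ≤ d)
    (P : S → A → S → ℝ) (hP0 : ∀ s a s', 0 ≤ P s a s') (hP1 : ∀ s a, ∑ s', P s a s' = 1)
    (R : S → A → Fin d → ℝ) (hR0 : ∀ s a i, 0 ≤ R s a i) (hR1 : ∀ s a i, R s a i ≤ 1)
    (γ : ℝ) (hγ0 : 0 ≤ γ) (hγ1 : γ < 1) (T : ℕ) (hT : 1 ≤ T) (W : (Fin d → ℝ) → ℝ)
    (ε δ : ℝ) (hε : 0 < ε) (hδ : 0 < δ)
    (hW : ∀ x y : Fin d → ℝ, l1norm (x - y) ≤ δ → |W x - W y| ≤ ε / 2)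
    (α : ℝ) (hα : α = δ / (T * d))
    (σ : S → (Fin d → ℝ) → ℕ → A)
    (hσ : ∀ (s : S) (v : Fin d → ℝ) (t : ℕ), 1 ≤ t → t ≤ T →
      ∑ s' : S, P s (σ s v t) s' *
          Vravi P R γ T W α (t - 1) s' (falpha α (v + γ ^ (T - t) • R s (σ s v t)))
        = Vravi P R γ T W α t s v)
    (s : S) :
    Uexec P R γ T W α σ T s 0 0 ≥ Vstar P R γ T W T s 0 - ε := by
  have hdpos : (0:ℝ) < d := by exact_mod_cast Nat.lt_of_lt_of_le Nat.zero_lt_one hd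
  have hTpos : (0:ℝ) < T := by exact_mod_cast Nat.lt_of_lt_of_le Nat.zero_lt_one hT
  have hαpos : 0 < α := by rw [hα]; positivity
  have hTd : (T:ℝ) * ((d:ℝ) * α) = δ := by rw [hα]; field_simp
  have hbound : l1norm ((0:Fin d → ℝ) - 0) + T * ((d:ℝ) * α) ≤ δ := by
    simp only [sub_zero, l1norm]
    simp [hTd]
  have h1 := vravi_close P hP0 hP1 R γ T W ε δ α hαpos hW T s 0 0 hbound
  have h2 := uexec_close P hP0 hP1 R γ T W ε δ α hαpos hW σ hσ T le_rfl s 0 0 hbound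
  rw [ge_iff_le]
  have h1' := abs_sub_le_iff.mp h1
  have h2' := abs_sub_le_iff.mp h2
  linarith [h1'.1, h1'.2, h2'.1, h2'.2]
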